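/- For real numbers x ≥ y ≥ 0 and q ≥ 2, one has 2(x^q + 2^(q-2) y^q) ≤ (x+y)^q + (x-y)^q. -/
import Mathlib

lemma aux_rpow_superadd {p a b : ℝ} (ha : 0 ≤ a) (hb : 0 ≤ b) (hp : 1 ≤ p) :
    a ^ p + b ^ p ≤ (a + b) ^ p := by
  have h := NNReal.add_rpow_le_rpow_add a.toNNReal b.toNNReal hp
  have h' := NNReal.coe_le_coe.2 h
  rw [NNReal.coe_add, NNReal.coe_rpow, NNReal.coe_rpow, NNReal.coe_rpow, NNReal.coe_add,
    Real.coe_toNNReal a ha, Real.coe_toNNReal b hb] at h'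
  exact h'

theorem stmt0 (x y q : ℝ) (hxy : x ≥ y) (hy : y ≥ 0) (hq : q ≥ 2) :
    2 * (x ^ q + 2 ^ (q - 2) * y ^ q) ≤ (x + y) ^ q + (x - y) ^ q := by
  have hx : (0:ℝ) ≤ x := le_trans hy hxy
  have hq1 : (1:ℝ) ≤ q := by linarith
  have hq1' : (1:ℝ) ≤ q - 1 := by linarith
  set g : ℝ → ℝ := fun t => (x + t) ^ q + (x - t) ^ q - 2 ^ (q - 1) * t ^ q with hg
  have hderiv : ∀ t : ℝ, HasDerivAt g
      (q * (x + t) ^ (q - 1) * 1 + q * (x - t) ^ (q - 1) * (-1)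
        - 2 ^ (q - 1) * (q * t ^ (q - 1))) t := by
    intro t
    have h1 : HasDerivAt (fun t : ℝ => (x + t) ^ q) (q * (x + t) ^ (q - 1) * 1) t :=
      (Real.hasDerivAt_rpow_const (Or.inr hq1)).comp t ((hasDerivAt_id t).const_add x)
    have h2 : HasDerivAt (fun t : ℝ => (x - t) ^ q) (q * (x - t) ^ (q - 1) * (-1)) t :=
      (Real.hasDerivAt_rpow_const (Or.inr hq1)).comp t ((hasDerivAt_id t).const_sub x)
    have h3 : HasDerivAt (fun t : ℝ => 2 ^ (q - 1) * t ^ q)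
        (2 ^ (q - 1) * (q * t ^ (q - 1))) t :=
      (Real.hasDerivAt_rpow_const (Or.inr hq1)).const_mul _
    exact (h1.add h2).sub h3
  have hdiff : Differentiable ℝ g := fun t => (hderiv t).differentiableAt
  have hmono : MonotoneOn g (Set.Icc 0 y) := by
    apply monotoneOn_of_deriv_nonneg (convex_Icc 0 y) hdiff.continuous.continuousOn
      hdiff.differentiableOn
    intro t ht
    rw [interior_Icc] at ht
    rw [(hderiv t).deriv]
    have ht0 : 0 < t := ht.1
    have hty : t < y := ht.2
    have htx : t ≤ x := le_trans hty.le hxy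
    have key : (x - t) ^ (q - 1) + (2 * t) ^ (q - 1) ≤ ((x - t) + 2 * t) ^ (q - 1) :=
      aux_rpow_superadd (by linarith) (by linarith) hq1'
    have hxt : (x - t) + 2 * t = x + t := by ring
    rw [hxt] at key
    have h2t : (2 * t) ^ (q - 1) = 2 ^ (q - 1) * t ^ (q - 1) :=
      Real.mul_rpow (by norm_num) ht0.le
    rw [h2t] at key
    have hqpos : (0:ℝ) < q := by linarith
    nlinarith [key, hqpos]
  have h0y : g 0 ≤ g y := hmono (Set.left_mem_Icc.mpr hy) (Set.right_mem_Icc.mpr hy) hy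
  have hg0 : g 0 = 2 * x ^ q := by
    simp [hg, Real.zero_rpow (by linarith : q ≠ 0)]
    ring
  have h2q : (2:ℝ) ^ (q - 1) = 2 * 2 ^ (q - 2) := by
    have he : q - 1 = (q - 2) + 1 := by ring
    rw [he, Real.rpow_add (by norm_num), Real.rpow_one]; ring
  have hmain : 2 * x ^ q ≤ (x + y) ^ q + (x - y) ^ q - 2 ^ (q - 1) * y ^ q := by
    rw [← hg0]; exact h0y
  have hrw : (2:ℝ) ^ (q - 1) * y ^ q = 2 * (2 ^ (q - 2) * y ^ q) := by rw [h2q]; ring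
  linarith [hmain, hrw.le, hrw.ge]
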